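/- Over K = ℂ (with Hermitian inner products on V and W) and α ∈ ℝ, the level set Γ_{α,β} = {(v,w) ∈ V₀ × W₀ : (‖v‖² − α‖w‖²)/2 = β} intersects every ℂ*-orbit of the action λ·(v,w) = (λv, λ⁻¹w) for every β ∈ ℝ if and only if α > 0. -/

import Mathlib

/-- Over ℂ, the level set Γ_{α,β} = {H = β} of H(v,w) = (‖v‖² − α‖w‖²)/2
intersects every ℂ*-orbit of the action λ·(v,w) = (λv, λ⁻¹w) for every β ∈ ℝ
if and only if α > 0. -/
theorem level_set_meets_every_orbit_iff (V W : Type*)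
    [NormedAddCommGroup V] [InnerProductSpace ℂ V] [FiniteDimensional ℂ V]
    [NormedAddCommGroup W] [InnerProductSpace ℂ W] [FiniteDimensional ℂ W]
    [Nontrivial V] [Nontrivial W] (α : ℝ) :
    (∀ β : ℝ, ∀ (v : V) (w : W), v ≠ 0 → w ≠ 0 →
      ∃ lam : ℂ, lam ≠ 0 ∧ (‖lam • v‖ ^ 2 - α * ‖lam⁻¹ • w‖ ^ 2) / 2 = β) ↔
    0 < α := by
  constructor
  · intro h
    by_contra hα
    push_neg at hα
    obtain ⟨v, hv⟩ := exists_ne (0 : V)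
    obtain ⟨w, hw⟩ := exists_ne (0 : W)
    obtain ⟨lam, hlam, heq⟩ := h (-1) v w hv hw
    have h1 : 0 < ‖lam • v‖ := norm_pos_iff.2 (smul_ne_zero hlam hv)
    have h2 : 0 ≤ ‖lam⁻¹ • w‖ := norm_nonneg _
    nlinarith [sq_nonneg (‖lam⁻¹ • w‖), sq_nonneg (‖lam • v‖),
      mul_nonneg (neg_nonneg.2 hα) (sq_nonneg ‖lam⁻¹ • w‖)]
  · intro hα β v w hv hw
    set a : ℝ := ‖v‖ ^ 2 with ha_def
    set b : ℝ := ‖w‖ ^ 2 with hb_def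
    have ha : 0 < a := pow_pos (norm_pos_iff.2 hv) 2
    have hb : 0 < b := pow_pos (norm_pos_iff.2 hw) 2
    set r : ℝ := Real.sqrt (β ^ 2 + a * (α * b)) with hr_def
    have hr0 : 0 ≤ r := Real.sqrt_nonneg _
    have hr2 : r ^ 2 = β ^ 2 + a * (α * b) := by
      rw [hr_def, Real.sq_sqrt]; positivity
    have habα : 0 < a * (α * b) := by positivity
    have hβr : 0 < β + r := by nlinarith
    set s : ℝ := (β + r) / a with hs_def
    have hs : 0 < s := div_pos hβr ha
    have hsq : 0 < Real.sqrt s := Real.sqrt_pos.2 hs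
    refine ⟨(Real.sqrt s : ℂ), by exact_mod_cast hsq.ne', ?_⟩
    have hnorm1 : ‖(Real.sqrt s : ℂ) • v‖ = Real.sqrt s * ‖v‖ := by
      rw [norm_smul, Complex.norm_real, Real.norm_eq_abs, abs_of_pos hsq]
    have hnorm2 : ‖((Real.sqrt s : ℂ))⁻¹ • w‖ = ‖w‖ / Real.sqrt s := by
      rw [norm_smul, norm_inv, Complex.norm_real, Real.norm_eq_abs,
        abs_of_pos hsq, inv_mul_eq_div]
    rw [hnorm1, hnorm2]
    have hss : Real.sqrt s ^ 2 = s := Real.sq_sqrt hs.le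
    have hsa : s * a = β + r := by rw [hs_def, div_mul_cancel₀ _ ha.ne']
    have key2 : α * b = s * (r - β) := by
      have h4 : a * (α * b) = a * (s * (r - β)) := by
        linear_combination (β - r) * hsa - hr2
      exact mul_left_cancel₀ ha.ne' h4
    have key3 : α * b / s = r - β := by
      rw [key2, mul_div_cancel_left₀ _ hs.ne']
    have key : s * a - α * b / s = 2 * β := by
      rw [hsa, key3]; ring
    rw [mul_pow, div_pow, hss, ← hb_def]
    linear_combination key / 2
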